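/- Let C be a pointed category with finite sums and n ≥ 1. There is a well-defined preadditive category T_n ℤ̄[C] with the same objects as C, morphism groups Hom(X,Y) = T_n U_X^C(Y) (the n-th Taylorization of the reduced standard projective functor U_X^C evaluated at Y), and bilinear composition satisfying t_n(g) ∘ t_n(f) = t_n(g ∘ f) for composable morphisms f, g of C. -/

import Mathlib

set_option maxHeartbeats 1000000


open CategoryTheory CategoryTheory.Limits

universe w v u

variable {C : Type u} [Category.{v} C] [HasZeroMorphisms C] [HasFiniteCoproducts C]

/-- The retraction `r_k : X₁ ∨ ⋯ ∨ X_n → X₁ ∨ ⋯ ∨ X̂_k ∨ ⋯ ∨ X_n` killing the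
`k`-th summand. -/
noncomputable def rhat {ι : Type} [Fintype ι] [DecidableEq ι] (X : ι → C) (k : ι) :
    (∐ X) ⟶ ∐ (fun i : {i : ι // i ≠ k} => X i.1) :=
  Sigma.desc (fun i =>
    if h : i = k then 0 else Sigma.ι (fun i : {i : ι // i ≠ k} => X i.1) ⟨i, h⟩)

/-- The submodule `ℤ·[0] ⊆ ℤ[Hom_C(X,Y)]` spanned by the zero morphism. -/
noncomputable def zspan (X Y : C) : Submodule ℤ ((X ⟶ Y) →₀ ℤ) :=
  Submodule.span ℤ {Finsupp.single (0 : X ⟶ Y) (1 : ℤ)}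

/-- The reduced standard projective functor
`U_X^C(Y) = ℤ[Hom_C(X,Y)]/ℤ·[0]` (Definition `UXC`). -/
noncomputable abbrev UX (X Y : C) :=
  ((X ⟶ Y) →₀ ℤ) ⧸ zspan X Y

/-- The functorial action of `U_X^C` on a morphism `h : Y ⟶ Z`. -/
noncomputable def UXmap (X : C) {Y Z : C} (h : Y ⟶ Z) :
    UX X Y →ₗ[ℤ] UX X Z :=
  Submodule.mapQ (zspan X Y) (zspan X Z)
    (Finsupp.lmapDomain ℤ ℤ (fun f : X ⟶ Y => f ≫ h))
    (by
      rw [zspan, Submodule.span_le]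
      rintro x hx
      simp only [Set.mem_singleton_iff] at hx
      subst hx
      simp only [SetLike.mem_coe, Submodule.mem_comap, Finsupp.lmapDomain_apply,
        Finsupp.mapDomain_single, Limits.zero_comp]
      exact Submodule.subset_span rfl)

/-- The image of the `(n+1)`-st cross-effect of `U_X^C` at `(Y,…,Y)` under the
fold map: the subgroup by which one divides to form `T_n U_X^C (Y)`. -/
noncomputable def TnIm (n : ℕ) (X Y : C) : Submodule ℤ (UX X Y) :=
  Submodule.map (UXmap X (Sigma.desc fun _ : Fin (n + 1) => 𝟙 Y))
    (⨅ k : Fin (n + 1),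
      LinearMap.ker (UXmap X (rhat (fun _ : Fin (n + 1) => Y) k)))

/-- The `n`-th Taylorization `T_n U_X^C (Y)` of the reduced standard projective
functor, evaluated at `Y`. -/
noncomputable abbrev TnU (n : ℕ) (X Y : C) :=
  UX X Y ⧸ TnIm n X Y

/-- The universal polynomial map of degree `≤ n`,
`t_n : Hom_C(X,Y) → T_n U_X^C (Y)`. -/
noncomputable def tn (n : ℕ) {X Y : C} (f : X ⟶ Y) : TnU n X Y :=
  Submodule.Quotient.mk (Submodule.Quotient.mk (Finsupp.single f (1 : ℤ)))

section Aux

set_option linter.unusedSectionVars false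

variable {M : Type*} [AddCommGroup M] [Module ℤ M]

/-- Two linear maps out of `UX X Y` agree if they agree on classes of singles. -/
lemma UX_ext {X Y : C} {φ ψ : UX X Y →ₗ[ℤ] M}
    (h : ∀ f : X ⟶ Y,
      φ (Submodule.Quotient.mk (Finsupp.single f (1 : ℤ))) =
      ψ (Submodule.Quotient.mk (Finsupp.single f (1 : ℤ)))) : φ = ψ := by
  refine Submodule.linearMap_qext _ (Finsupp.lhom_ext' fun f => LinearMap.ext_ring ?_)
  simpa using h f

lemma UX_zero_single {X Y : C} :
    (Submodule.Quotient.mk (Finsupp.single (0 : X ⟶ Y) (1 : ℤ)) : UX X Y) = 0 :=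
  (Submodule.Quotient.mk_eq_zero _).2 (Submodule.subset_span rfl)

@[simp] lemma UXmap_single (X : C) {Y Z : C} (h : Y ⟶ Z) (f : X ⟶ Y) :
    UXmap X h (Submodule.Quotient.mk (Finsupp.single f (1 : ℤ))) =
      Submodule.Quotient.mk (Finsupp.single (f ≫ h) (1 : ℤ)) := by
  simp [UXmap, Submodule.mapQ_apply]

lemma UXmap_comp (X : C) {Y Z W : C} (h : Y ⟶ Z) (h' : Z ⟶ W) :
    UXmap X (h ≫ h') = (UXmap X h').comp (UXmap X h) :=
  (UX_ext fun f => by simp)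

/-- Precomposition with `f : X ⟶ Y`, a natural transformation `U_Y → U_X`. -/
noncomputable def Pmap {X Y : C} (f : X ⟶ Y) (Z : C) : UX Y Z →ₗ[ℤ] UX X Z :=
  Submodule.mapQ (zspan Y Z) (zspan X Z)
    (Finsupp.lmapDomain ℤ ℤ (fun g : Y ⟶ Z => f ≫ g))
    (by
      rw [zspan, Submodule.span_le]
      rintro x hx
      simp only [Set.mem_singleton_iff] at hx
      subst hx
      simp only [SetLike.mem_coe, Submodule.mem_comap, Finsupp.lmapDomain_apply,
        Finsupp.mapDomain_single, Limits.comp_zero]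
      exact Submodule.subset_span rfl)

@[simp] lemma Pmap_single {X Y : C} (f : X ⟶ Y) {Z : C} (g : Y ⟶ Z) :
    Pmap f Z (Submodule.Quotient.mk (Finsupp.single g (1 : ℤ))) =
      Submodule.Quotient.mk (Finsupp.single (f ≫ g) (1 : ℤ)) := by
  simp [Pmap, Submodule.mapQ_apply]

lemma Pmap_UXmap {X Y : C} (f : X ⟶ Y) {Z W : C} (h : Z ⟶ W) :
    (Pmap f W).comp (UXmap Y h) = (UXmap X h).comp (Pmap f Z) :=
  (UX_ext fun g => by simp)

/-- Postcomposition preserves the subgroup `TnIm`. -/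
lemma TnIm_post (n : ℕ) {X Y Z : C} (g : Y ⟶ Z) {b : UX X Y}
    (hb : b ∈ TnIm n X Y) : UXmap X g b ∈ TnIm n X Z := by
  obtain ⟨u, hu, rfl⟩ := hb
  have h1 : (Sigma.desc fun _ : Fin (n + 1) => 𝟙 Y) ≫ g =
      Limits.Sigma.map (fun _ : Fin (n + 1) => g) ≫
        Sigma.desc fun _ : Fin (n + 1) => 𝟙 Z := by
    ext i; simp
  refine ⟨UXmap X (Limits.Sigma.map (fun _ : Fin (n + 1) => g)) u, ?_, ?_⟩
  · simp only [SetLike.mem_coe, Submodule.mem_iInf, LinearMap.mem_ker] at hu ⊢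
    intro k
    have h2 : Limits.Sigma.map (fun _ : Fin (n + 1) => g) ≫
          rhat (fun _ : Fin (n + 1) => Z) k =
        rhat (fun _ : Fin (n + 1) => Y) k ≫
          Limits.Sigma.map (fun _ : {i : Fin (n + 1) // i ≠ k} => g) := by
      ext i
      by_cases h : i = k <;> simp [rhat, h]
    have h3 := congrArg (fun φ => φ u)
      (UXmap_comp X (Limits.Sigma.map (fun _ : Fin (n + 1) => g))
        (rhat (fun _ : Fin (n + 1) => Z) k))
    simp only [LinearMap.comp_apply] at h3
    rw [← h3, h2, UXmap_comp]
    simp [hu k]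
  · have h3 := congrArg (fun φ => φ u)
      (UXmap_comp X (Limits.Sigma.map (fun _ : Fin (n + 1) => g))
        (Sigma.desc fun _ : Fin (n + 1) => 𝟙 Z))
    simp only [LinearMap.comp_apply] at h3
    rw [← h3, ← h1, UXmap_comp]
    rfl

/-- Precomposition preserves the subgroup `TnIm`. -/
lemma TnIm_pre (n : ℕ) {X Y Z : C} (f : X ⟶ Y) {c : UX Y Z}
    (hc : c ∈ TnIm n Y Z) : Pmap f Z c ∈ TnIm n X Z := by
  obtain ⟨u, hu, rfl⟩ := hc
  refine ⟨Pmap f _ u, ?_, ?_⟩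
  · simp only [SetLike.mem_coe, Submodule.mem_iInf, LinearMap.mem_ker] at hu ⊢
    intro k
    have := congrArg (fun φ => φ u) (Pmap_UXmap f (rhat (fun _ : Fin (n + 1) => Z) k))
    simp only [LinearMap.comp_apply] at this
    rw [← this, hu k, map_zero]
  · have := congrArg (fun φ => φ u) (Pmap_UXmap f (Sigma.desc fun _ : Fin (n + 1) => 𝟙 Z))
    simp only [LinearMap.comp_apply] at this
    exact this.symm

lemma tn_zero (n : ℕ) {X Y : C} : tn n (0 : X ⟶ Y) = 0 := by
  rw [tn, UX_zero_single]; rfl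

/-- Two linear maps out of `TnU n X Y` agree if they agree on the `tn n f`. -/
lemma TnU_ext {n : ℕ} {X Y : C} {φ ψ : TnU n X Y →ₗ[ℤ] M}
    (h : ∀ f : X ⟶ Y, φ (tn n f) = ψ (tn n f)) : φ = ψ :=
  Submodule.linearMap_qext _ (UX_ext fun f => h f)

omit [Module ℤ M] in
lemma TnU_hom_ext {n : ℕ} {X Y : C} {φ ψ : TnU n X Y →+ M}
    (h : ∀ f : X ⟶ Y, φ (tn n f) = ψ (tn n f)) : φ = ψ := by
  have : φ.toIntLinearMap = ψ.toIntLinearMap := TnU_ext h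
  ext a
  exact congrArg (fun ρ => ρ a) (congrArg LinearMap.toAddMonoidHom this)

/-- Composition with a fixed `g : Y ⟶ Z`, as a map `TnU n X Y →ₗ TnU n X Z`. -/
noncomputable def comp3 (n : ℕ) (X : C) {Y Z : C} (g : Y ⟶ Z) :
    TnU n X Y →ₗ[ℤ] TnU n X Z :=
  Submodule.liftQ (TnIm n X Y) ((TnIm n X Z).mkQ.comp (UXmap X g))
    (fun b hb => by
      simp only [LinearMap.mem_ker, LinearMap.comp_apply, Submodule.mkQ_apply,
        Submodule.Quotient.mk_eq_zero]
      exact TnIm_post n g hb)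

@[simp] lemma comp3_tn (n : ℕ) (X : C) {Y Z : C} (g : Y ⟶ Z) (f : X ⟶ Y) :
    comp3 n X g (tn n f) = tn n (f ≫ g) := by
  simp [comp3, tn]

/-- Composition, linear in the first (outer) variable at the `UX` level. -/
noncomputable def comp5 (n : ℕ) (X : C) {Y Z : C} :
    UX Y Z →ₗ[ℤ] (TnU n X Y →ₗ[ℤ] TnU n X Z) :=
  Submodule.liftQ (zspan Y Z)
    (Finsupp.linearCombination ℤ (fun g : Y ⟶ Z => comp3 n X g))
    (by
      rw [zspan, Submodule.span_le]
      rintro x hx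
      simp only [Set.mem_singleton_iff] at hx
      subst hx
      simp only [SetLike.mem_coe, LinearMap.mem_ker,
        Finsupp.linearCombination_single, one_smul]
      exact TnU_ext fun f => by simp [tn_zero])

@[simp] lemma comp5_single (n : ℕ) (X : C) {Y Z : C} (g : Y ⟶ Z) :
    comp5 n X (Submodule.Quotient.mk (Finsupp.single g (1 : ℤ))) = comp3 n X g := by
  simp [comp5]

lemma comp5_apply_tn (n : ℕ) (X : C) {Y Z : C} (f : X ⟶ Y) (c : UX Y Z) :
    comp5 n X c (tn n f) = (TnIm n X Z).mkQ (Pmap f Z c) := by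
  have : (LinearMap.applyₗ (tn n f)).comp (comp5 n X) =
      (TnIm n X Z).mkQ.comp (Pmap f Z) := by
    refine UX_ext fun g => ?_
    simp only [LinearMap.comp_apply, LinearMap.applyₗ_apply_apply, comp5_single,
      Submodule.mkQ_apply, Pmap_single]
    exact comp3_tn n X g f
  exact congrArg (fun φ => φ c) this

/-- Composition, fully descended. -/
noncomputable def comp6 (n : ℕ) (X : C) {Y Z : C} :
    TnU n Y Z →ₗ[ℤ] (TnU n X Y →ₗ[ℤ] TnU n X Z) :=
  Submodule.liftQ (TnIm n Y Z) (comp5 n X)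
    (fun c hc => by
      simp only [LinearMap.mem_ker]
      refine TnU_ext fun f => ?_
      rw [comp5_apply_tn]
      simpa [Submodule.Quotient.mk_eq_zero] using
        (Submodule.Quotient.mk_eq_zero _).2 (TnIm_pre n f hc))

@[simp] lemma comp6_tn_tn (n : ℕ) (X : C) {Y Z : C} (g : Y ⟶ Z) (f : X ⟶ Y) :
    comp6 n X (tn n g) (tn n f) = tn n (f ≫ g) := by
  rw [tn, comp6, Submodule.liftQ_apply, comp5_single, comp3_tn]

/-- The bilinear composition, bundled as additive maps. -/
noncomputable def compA (n : ℕ) (X Y Z : C) :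
    TnU n Y Z →+ TnU n X Y →+ TnU n X Z :=
  AddMonoidHom.comp LinearMap.toAddMonoidHom'
    (comp6 n X (Y := Y) (Z := Z)).toAddMonoidHom

lemma compA_tn_tn (n : ℕ) {X Y Z : C} (f : X ⟶ Y) (g : Y ⟶ Z) :
    compA n X Y Z (tn n g) (tn n f) = tn n (f ≫ g) := by
  simpa [compA] using comp6_tn_tn n X g f

/-- Induction principle: `TnU n X Y` is generated by the `tn n f`. -/
lemma TnU_induction (n : ℕ) {X Y : C} {p : TnU n X Y → Prop}
    (htn : ∀ f : X ⟶ Y, p (tn n f))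
    (h0 : p 0)
    (hadd : ∀ x y, p x → p y → p (x + y))
    (hsmul : ∀ (c : ℤ) x, p x → p (c • x)) :
    ∀ a, p a := by
  intro a
  obtain ⟨a, rfl⟩ := Submodule.Quotient.mk_surjective _ a
  obtain ⟨a, rfl⟩ := Submodule.Quotient.mk_surjective _ a
  induction a using Finsupp.induction with
  | zero =>
    simpa only [Submodule.Quotient.mk_zero] using h0
  | single_add f b g _ _ ih =>
    have e1 : Finsupp.single f b = b • Finsupp.single f (1 : ℤ) := by
      simp [Finsupp.smul_single]
    have e2 : (Submodule.Quotient.mk (Submodule.Quotient.mk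
          (Finsupp.single f b + g)) : TnU n X Y) =
        b • tn n f + Submodule.Quotient.mk (Submodule.Quotient.mk g) := by
      rw [e1]
      simp only [Submodule.Quotient.mk_add, Submodule.Quotient.mk_smul, tn]
    rw [e2]
    exact hadd _ _ (hsmul b _ (htn f)) ih

end Aux
/-- Let `C` be a pointed category with finite sums and
`n ≥ 1`.  There is a well-defined preadditive category `T_n ℤ̄[C]` with the same
objects as `C`, with morphism groups `Hom(X,Y) = T_n U_X^C (Y)`, and with a
(bi)additive composition satisfying `t_n(g) ∘ t_n(f) = t_n(g ∘ f)` — in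
particular the composition is associative and the elements `t_n(𝟙)` are
identities. -/
theorem taylorized_category_exists (n : ℕ) (hn : 1 ≤ n) :
    ∃ comp : ∀ X Y Z : C, TnU n Y Z →+ TnU n X Y →+ TnU n X Z,
      (∀ (X Y Z : C) (f : X ⟶ Y) (g : Y ⟶ Z),
        comp X Y Z (tn n g) (tn n f) = tn n (f ≫ g)) ∧
      (∀ (X Y : C) (a : TnU n X Y), comp X X Y a (tn n (𝟙 X)) = a) ∧
      (∀ (X Y : C) (a : TnU n X Y), comp X Y Y (tn n (𝟙 Y)) a = a) ∧
      (∀ (W X Y Z : C) (a : TnU n W X) (b : TnU n X Y) (c : TnU n Y Z),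
        comp W X Z (comp X Y Z c b) a = comp W Y Z c (comp W X Y b a)) := by
  classical
  refine ⟨compA n, fun X Y Z f g => compA_tn_tn n f g, ?_, ?_, ?_⟩
  · intro X Y
    refine TnU_induction n (fun g => ?_) ?_ (fun x y hx hy => ?_) (fun c x hx => ?_)
    · rw [compA_tn_tn, Category.id_comp]
    · simp
    · simp only [map_add, AddMonoidHom.add_apply, hx, hy]
    · simp only [map_zsmul, AddMonoidHom.coe_smul, Pi.smul_apply, hx]
  · intro X Y
    refine TnU_induction n (fun f => ?_) ?_ (fun x y hx hy => ?_) (fun c x hx => ?_)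
    · rw [compA_tn_tn, Category.comp_id]
    · simp
    · simp only [map_add, hx, hy]
    · simp only [map_zsmul, hx]
  · intro W X Y Z a b c
    induction c using TnU_induction n with
    | htn h =>
      induction b using TnU_induction n with
      | htn g =>
        induction a using TnU_induction n with
        | htn f => simp only [compA_tn_tn, Category.assoc]
        | h0 => simp
        | hadd x y hx hy => simp only [map_add, hx, hy]
        | hsmul c x hx => simp only [map_zsmul, hx]
      | h0 => simp
      | hadd x y hx hy =>
        simp only [map_add, AddMonoidHom.add_apply, hx, hy]
      | hsmul c x hx =>
        simp only [map_zsmul, AddMonoidHom.coe_smul, Pi.smul_apply, hx]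
    | h0 => simp
    | hadd x y hx hy =>
      simp only [map_add, AddMonoidHom.add_apply, hx, hy]
    | hsmul c x hx =>
      simp only [map_zsmul, AddMonoidHom.coe_smul, Pi.smul_apply, hx]
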